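/- Let R be a nonzero commutative ring with identity, let 2 ≤ k < n, let f_i : R^{2i-2} → R for 2 ≤ i ≤ n be arbitrary functions, and let A ⊆ R. Then the projection map η sending a point (p_1,…,p_n) to the point (p_1,…,p_k) and a line [l_1,…,l_n] to the line [l_1,…,l_k] is a covering map from BΓ_n[A] (built from f_2,…,f_n) onto BΓ_k[A] (built from f_2,…,f_k): η is surjective, η preserves adjacency, and for every vertex v of BΓ_n[A] the restriction of η to the neighborhood of v is a bijection onto the neighborhood of η(v). -/
import Mathlib


/-- The adjacency condition of the graph `BΓ(R; f₂, …, f_n)`. -/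
def bAdj {R : Type} [CommRing R] (n : ℕ)
    (f : (i : ℕ) → (Fin i → R) → (Fin i → R) → R)
    (p l : Fin n → R) : Prop :=
  ∀ i : Fin n, 1 ≤ (i : ℕ) →
    p i + l i = f i (fun j => p (Fin.castLE i.isLt.le j))
                    (fun j => l (Fin.castLE i.isLt.le j))

/-- The bipartite graph `BΓ(R; f₂, …, f_n)`. -/
def BGamma (R : Type) [CommRing R] (n : ℕ)
    (f : (i : ℕ) → (Fin i → R) → (Fin i → R) → R) :
    SimpleGraph ((Fin n → R) ⊕ (Fin n → R)) :=
  SimpleGraph.fromRel (fun x y => ∃ p l, x = Sum.inl p ∧ y = Sum.inr l ∧ bAdj n f p l)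

/-- Truncation of a vector to its first `k` coordinates. -/
def truncFun {R : Type} {n k : ℕ} (h : k ≤ n) (v : Fin n → R) : Fin k → R :=
  fun j => v (Fin.castLE h j)

/-- The set of vertices (points and lines) whose first coordinate lies in `A`;
`BΓ_n[A]` is the subgraph induced on this set. -/
def firstIn (R : Type) [CommRing R] (A : Set R) (n : ℕ) (hn : 0 < n) :
    Set ((Fin n → R) ⊕ (Fin n → R)) :=
  {v | Sum.elim (fun p : Fin n → R => p ⟨0, hn⟩) (fun l : Fin n → R => l ⟨0, hn⟩) v ∈ A}

/-- The projection `η` keeping the first `k` coordinates of points and of lines, as a map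
between the vertex sets of `BΓ_n[A]` and `BΓ_k[A]`. -/
def eta (R : Type) [CommRing R] (A : Set R) {n k : ℕ} (h : k ≤ n) (hk : 0 < k) (hn : 0 < n)
    (v : firstIn R A n hn) : firstIn R A k hk :=
  ⟨Sum.map (truncFun h) (truncFun h) v.1, by
    obtain ⟨x, hx⟩ := v
    cases x with
    | inl p => exact hx
    | inr l => exact hx⟩


set_option linter.unusedSectionVars false

section
variable {R : Type} [CommRing R]


private def extA {n k : ℕ} (g : (i : ℕ) → i < n → (Fin i → R) → R) (m : Fin k → R) :
    (i : ℕ) → i < n → R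
  | i, hi =>
    if h : i < k then m ⟨i, h⟩
    else g i hi fun j : Fin i => extA g m j (lt_trans j.2 hi)
termination_by i _ => i

private lemma extA_lt {n k : ℕ} (g : (i : ℕ) → i < n → (Fin i → R) → R) (m : Fin k → R)
    (i : ℕ) (hi : i < n) (h : i < k) : extA g m i hi = m ⟨i, h⟩ := by
  rw [extA]; exact dif_pos h

private lemma extA_ge {n k : ℕ} (g : (i : ℕ) → i < n → (Fin i → R) → R) (m : Fin k → R)
    (i : ℕ) (hi : i < n) (h : ¬ i < k) :
    extA g m i hi = g i hi (fun j : Fin i => extA g m j (lt_trans j.2 hi)) := by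
  rw [extA]; exact dif_neg h

private lemma solve_unique {n : ℕ} (g : (i : ℕ) → i < n → (Fin i → R) → R)
    (x y : Fin n → R)
    (h0 : ∀ h : 0 < n, x ⟨0, h⟩ = y ⟨0, h⟩)
    (hx : ∀ (i : ℕ) (hi : i < n), 1 ≤ i →
      x ⟨i, hi⟩ = g i hi (fun j : Fin i => x ⟨j, lt_trans j.2 hi⟩))
    (hy : ∀ (i : ℕ) (hi : i < n), 1 ≤ i →
      y ⟨i, hi⟩ = g i hi (fun j : Fin i => y ⟨j, lt_trans j.2 hi⟩)) : x = y := by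
  have key : ∀ i, ∀ hi : i < n, x ⟨i, hi⟩ = y ⟨i, hi⟩ := by
    intro i
    induction i using Nat.strong_induction_on with
    | _ i IH =>
      intro hi
      rcases Nat.eq_zero_or_pos i with h | h
      · subst h; exact h0 hi
      · rw [hx i hi h, hy i hi h]
        congr 1
        funext j
        exact IH j j.2 _
  funext i
  exact key i.1 i.2

private lemma unique_line {n : ℕ} (f : (i : ℕ) → (Fin i → R) → (Fin i → R) → R)
    (p x y : Fin n → R) (hx : bAdj n f p x) (hy : bAdj n f p y)
    (h0 : ∀ h : 0 < n, x ⟨0, h⟩ = y ⟨0, h⟩) : x = y := by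
  apply solve_unique
    (fun i hi w => f i (fun j : Fin i => p ⟨j.1, lt_trans j.2 hi⟩) w - p ⟨i, hi⟩) x y h0
  · intro i hi h1
    exact eq_sub_of_add_eq' (hx ⟨i, hi⟩ h1)
  · intro i hi h1
    exact eq_sub_of_add_eq' (hy ⟨i, hi⟩ h1)

private lemma unique_point {n : ℕ} (f : (i : ℕ) → (Fin i → R) → (Fin i → R) → R)
    (l x y : Fin n → R) (hx : bAdj n f x l) (hy : bAdj n f y l)
    (h0 : ∀ h : 0 < n, x ⟨0, h⟩ = y ⟨0, h⟩) : x = y := by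
  apply solve_unique
    (fun i hi w => f i w (fun j : Fin i => l ⟨j.1, lt_trans j.2 hi⟩) - l ⟨i, hi⟩) x y h0
  · intro i hi h1
    exact eq_sub_of_add_eq (hx ⟨i, hi⟩ h1)
  · intro i hi h1
    exact eq_sub_of_add_eq (hy ⟨i, hi⟩ h1)

private lemma ext_point {n k : ℕ} (hkn : k ≤ n)
    (f : (i : ℕ) → (Fin i → R) → (Fin i → R) → R)
    (p : Fin n → R) (m : Fin k → R)
    (hm : bAdj k f (truncFun hkn p) m) :
    ∃ L : Fin n → R, truncFun hkn L = m ∧ bAdj n f p L := by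
  set G : (i : ℕ) → i < n → (Fin i → R) → R :=
    fun i hi w => f i (fun j : Fin i => p ⟨j.1, lt_trans j.2 hi⟩) w - p ⟨i, hi⟩ with hG
  refine ⟨fun i : Fin n => extA G m i.1 i.2, ?_, ?_⟩
  · funext j
    exact extA_lt G m j.1 (lt_of_lt_of_le j.2 hkn) j.2
  · intro i hi1
    show p i + extA G m i.1 i.2
        = f i.1 (fun j : Fin (i : ℕ) => p (Fin.castLE i.isLt.le j))
                (fun j : Fin (i : ℕ) => extA G m j.1 (lt_trans j.2 i.2))
    by_cases h : (i : ℕ) < k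
    · rw [extA_lt G m i.1 i.2 h]
      have eB : (fun j : Fin (i : ℕ) => extA G m j.1 (lt_trans j.2 i.2))
          = (fun j : Fin (i : ℕ) => m (Fin.castLE (le_of_lt h) j)) := by
        funext j
        exact extA_lt G m j.1 _ (lt_trans j.2 h)
      rw [eB]
      exact hm ⟨i.1, h⟩ hi1
    · rw [extA_ge G m i.1 i.2 h]
      show p i + (f i.1 (fun j : Fin (i : ℕ) => p (Fin.castLE i.isLt.le j))
                (fun j : Fin (i : ℕ) => extA G m j.1 (lt_trans j.2 i.2)) - p i)
          = f i.1 (fun j : Fin (i : ℕ) => p (Fin.castLE i.isLt.le j))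
                (fun j : Fin (i : ℕ) => extA G m j.1 (lt_trans j.2 i.2))
      ring

private lemma ext_line {n k : ℕ} (hkn : k ≤ n)
    (f : (i : ℕ) → (Fin i → R) → (Fin i → R) → R)
    (l : Fin n → R) (m : Fin k → R)
    (hm : bAdj k f m (truncFun hkn l)) :
    ∃ P : Fin n → R, truncFun hkn P = m ∧ bAdj n f P l := by
  set G : (i : ℕ) → i < n → (Fin i → R) → R :=
    fun i hi w => f i w (fun j : Fin i => l ⟨j.1, lt_trans j.2 hi⟩) - l ⟨i, hi⟩ with hG
  refine ⟨fun i : Fin n => extA G m i.1 i.2, ?_, ?_⟩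
  · funext j
    exact extA_lt G m j.1 (lt_of_lt_of_le j.2 hkn) j.2
  · intro i hi1
    show extA G m i.1 i.2 + l i
        = f i.1 (fun j : Fin (i : ℕ) => extA G m j.1 (lt_trans j.2 i.2))
                (fun j : Fin (i : ℕ) => l (Fin.castLE i.isLt.le j))
    by_cases h : (i : ℕ) < k
    · rw [extA_lt G m i.1 i.2 h]
      have eB : (fun j : Fin (i : ℕ) => extA G m j.1 (lt_trans j.2 i.2))
          = (fun j : Fin (i : ℕ) => m (Fin.castLE (le_of_lt h) j)) := by
        funext j
        exact extA_lt G m j.1 _ (lt_trans j.2 h)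
      rw [eB]
      exact hm ⟨i.1, h⟩ hi1
    · rw [extA_ge G m i.1 i.2 h]
      show (f i.1 (fun j : Fin (i : ℕ) => extA G m j.1 (lt_trans j.2 i.2))
                (fun j : Fin (i : ℕ) => l (Fin.castLE i.isLt.le j)) - l i) + l i
          = f i.1 (fun j : Fin (i : ℕ) => extA G m j.1 (lt_trans j.2 i.2))
                (fun j : Fin (i : ℕ) => l (Fin.castLE i.isLt.le j))
      ring

end

/-- The projection `η` is a covering map from `BΓ_n[A]` onto `BΓ_k[A]`: it is surjective,
preserves adjacency, and restricts to a bijection between neighborhoods. -/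
theorem statement_3 (R : Type) [CommRing R] [Nontrivial R] (n k : ℕ)
    (hk : 2 ≤ k) (hkn : k < n)
    (f : (i : ℕ) → (Fin i → R) → (Fin i → R) → R) (A : Set R) :
    Function.Surjective (eta R A hkn.le (by omega) (by omega)) ∧
    (∀ u v : firstIn R A n (by omega),
      ((BGamma R n f).induce (firstIn R A n (by omega))).Adj u v →
      ((BGamma R k f).induce (firstIn R A k (by omega))).Adj
        (eta R A hkn.le (by omega) (by omega) u) (eta R A hkn.le (by omega) (by omega) v)) ∧
    (∀ v : firstIn R A n (by omega),
      Set.BijOn (eta R A hkn.le (by omega) (by omega))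
        (((BGamma R n f).induce (firstIn R A n (by omega))).neighborSet v)
        (((BGamma R k f).induce (firstIn R A k (by omega))).neighborSet
          (eta R A hkn.le (by omega) (by omega) v))) := by
  have hk0 : 0 < k := by omega
  have hn0 : 0 < n := by omega
  -- truncation preserves adjacency
  have truncAdj : ∀ p l : Fin n → R, bAdj n f p l →
      bAdj k f (truncFun hkn.le p) (truncFun hkn.le l) := by
    intro p l h i hi
    exact h ⟨i.1, lt_trans i.2 hkn⟩ hi
  -- part 2 : adjacency preservation
  have adjpres : ∀ u v : firstIn R A n hn0,
      ((BGamma R n f).induce (firstIn R A n hn0)).Adj u v →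
      ((BGamma R k f).induce (firstIn R A k hk0)).Adj
        (eta R A hkn.le hk0 hn0 u) (eta R A hkn.le hk0 hn0 v) := by
    rintro ⟨u, hu⟩ ⟨v, hv⟩ hadj
    have hadj' : (BGamma R n f).Adj u v := hadj
    rw [BGamma, SimpleGraph.fromRel_adj] at hadj'
    obtain ⟨hne, hrel⟩ := hadj'
    show (BGamma R k f).Adj (Sum.map (truncFun hkn.le) (truncFun hkn.le) u)
      (Sum.map (truncFun hkn.le) (truncFun hkn.le) v)
    rw [BGamma, SimpleGraph.fromRel_adj]
    rcases hrel with ⟨p, l, h1, h2, h3⟩ | ⟨p, l, h1, h2, h3⟩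
    · subst h1; subst h2
      exact ⟨by simp, Or.inl ⟨truncFun hkn.le p, truncFun hkn.le l, rfl, rfl, truncAdj p l h3⟩⟩
    · subst h1; subst h2
      exact ⟨by simp, Or.inr ⟨truncFun hkn.le p, truncFun hkn.le l, rfl, rfl, truncAdj p l h3⟩⟩
  refine ⟨?_, ?_, ?_⟩
  · -- surjectivity
    rintro ⟨w, hw⟩
    cases w with
    | inl m =>
      refine ⟨⟨Sum.inl (fun i : Fin n => if h : (i : ℕ) < k then m ⟨i.1, h⟩ else 0), ?_⟩, ?_⟩
      · show (if h : (0 : ℕ) < k then m ⟨0, h⟩ else 0) ∈ A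
        rw [dif_pos hk0]
        exact hw
      · apply Subtype.ext
        show Sum.inl (truncFun hkn.le
          (fun i : Fin n => if h : (i : ℕ) < k then m ⟨i.1, h⟩ else 0)) = Sum.inl m
        refine congrArg Sum.inl (funext fun j => ?_)
        show (if h : (j : ℕ) < k then m ⟨j.1, h⟩ else 0) = m j
        rw [dif_pos j.2]
    | inr m =>
      refine ⟨⟨Sum.inr (fun i : Fin n => if h : (i : ℕ) < k then m ⟨i.1, h⟩ else 0), ?_⟩, ?_⟩
      · show (if h : (0 : ℕ) < k then m ⟨0, h⟩ else 0) ∈ A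
        rw [dif_pos hk0]
        exact hw
      · apply Subtype.ext
        show Sum.inr (truncFun hkn.le
          (fun i : Fin n => if h : (i : ℕ) < k then m ⟨i.1, h⟩ else 0)) = Sum.inr m
        refine congrArg Sum.inr (funext fun j => ?_)
        show (if h : (j : ℕ) < k then m ⟨j.1, h⟩ else 0) = m j
        rw [dif_pos j.2]
  · -- adjacency preservation
    exact adjpres
  · -- neighborhood bijection
    rintro ⟨w, hw⟩
    cases w with
    | inl p =>
      have char : ∀ u : firstIn R A n hn0,
          ((BGamma R n f).induce (firstIn R A n hn0)).Adj ⟨Sum.inl p, hw⟩ u →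
          ∃ l hl, u = ⟨Sum.inr l, hl⟩ ∧ bAdj n f p l := by
        rintro ⟨x, hx⟩ hadj
        have hadj' : (BGamma R n f).Adj (Sum.inl p) x := hadj
        rw [BGamma, SimpleGraph.fromRel_adj] at hadj'
        obtain ⟨-, ⟨p', l, h1, h2, h3⟩ | ⟨p', l, h1, h2, h3⟩⟩ := hadj'
        · obtain rfl : p' = p := by injection h1 with h; exact h.symm
          subst h2
          exact ⟨l, hx, rfl, h3⟩
        · simp at h2
      refine ⟨?_, ?_, ?_⟩
      · intro u hu
        exact adjpres _ u hu
      · intro u hu u' hu' heq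
        obtain ⟨l, hl, rfl, hadjl⟩ := char u hu
        obtain ⟨l', hl', rfl, hadjl'⟩ := char u' hu'
        have h2 : truncFun hkn.le l = truncFun hkn.le l' := by
          simpa [eta] using congrArg Subtype.val heq
        have h0 : ∀ h : 0 < n, l ⟨0, h⟩ = l' ⟨0, h⟩ := fun h => congrFun h2 ⟨0, hk0⟩
        have := unique_line f p l l' hadjl hadjl' h0
        subst this
        rfl
      · rintro ⟨x, hx⟩ hwmem
        have hadj : (BGamma R k f).Adj (Sum.inl (truncFun hkn.le p)) x := hwmem
        rw [BGamma, SimpleGraph.fromRel_adj] at hadj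
        obtain ⟨-, ⟨p', m, h1, h2, h3⟩ | ⟨p', m, h1, h2, h3⟩⟩ := hadj
        · obtain rfl : p' = truncFun hkn.le p := by injection h1 with h; exact h.symm
          subst h2
          obtain ⟨L, hL1, hL2⟩ := ext_point hkn.le f p m h3
          have hL0 : L ⟨0, hn0⟩ = m ⟨0, hk0⟩ := congrFun hL1 ⟨0, hk0⟩
          refine ⟨⟨Sum.inr L, ?_⟩, ?_, ?_⟩
          · show L ⟨0, hn0⟩ ∈ A
            rw [hL0]
            exact hx
          · show (BGamma R n f).Adj (Sum.inl p) (Sum.inr L)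
            rw [BGamma, SimpleGraph.fromRel_adj]
            exact ⟨by simp, Or.inl ⟨p, L, rfl, rfl, hL2⟩⟩
          · apply Subtype.ext
            show Sum.inr (truncFun hkn.le L) = Sum.inr m
            exact congrArg Sum.inr hL1
        · simp at h2
    | inr l =>
      have char : ∀ u : firstIn R A n hn0,
          ((BGamma R n f).induce (firstIn R A n hn0)).Adj ⟨Sum.inr l, hw⟩ u →
          ∃ q hq, u = ⟨Sum.inl q, hq⟩ ∧ bAdj n f q l := by
        rintro ⟨x, hx⟩ hadj
        have hadj' : (BGamma R n f).Adj (Sum.inr l) x := hadj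
        rw [BGamma, SimpleGraph.fromRel_adj] at hadj'
        obtain ⟨-, ⟨q, l', h1, h2, h3⟩ | ⟨q, l', h1, h2, h3⟩⟩ := hadj'
        · simp at h1
        · obtain rfl : l' = l := by injection h2 with h; exact h.symm
          subst h1
          exact ⟨q, hx, rfl, h3⟩
      refine ⟨?_, ?_, ?_⟩
      · intro u hu
        exact adjpres _ u hu
      · intro u hu u' hu' heq
        obtain ⟨q, hq, rfl, hadjq⟩ := char u hu
        obtain ⟨q', hq', rfl, hadjq'⟩ := char u' hu'
        have h2 : truncFun hkn.le q = truncFun hkn.le q' := by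
          simpa [eta] using congrArg Subtype.val heq
        have h0 : ∀ h : 0 < n, q ⟨0, h⟩ = q' ⟨0, h⟩ := fun h => congrFun h2 ⟨0, hk0⟩
        have := unique_point f l q q' hadjq hadjq' h0
        subst this
        rfl
      · rintro ⟨x, hx⟩ hwmem
        have hadj : (BGamma R k f).Adj (Sum.inr (truncFun hkn.le l)) x := hwmem
        rw [BGamma, SimpleGraph.fromRel_adj] at hadj
        obtain ⟨-, ⟨m, l', h1, h2, h3⟩ | ⟨m, l', h1, h2, h3⟩⟩ := hadj
        · simp at h1
        · obtain rfl : l' = truncFun hkn.le l := by injection h2 with h; exact h.symm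
          subst h1
          obtain ⟨P, hP1, hP2⟩ := ext_line hkn.le f l m h3
          have hP0 : P ⟨0, hn0⟩ = m ⟨0, hk0⟩ := congrFun hP1 ⟨0, hk0⟩
          refine ⟨⟨Sum.inl P, ?_⟩, ?_, ?_⟩
          · show P ⟨0, hn0⟩ ∈ A
            rw [hP0]
            exact hx
          · show (BGamma R n f).Adj (Sum.inr l) (Sum.inl P)
            rw [BGamma, SimpleGraph.fromRel_adj]
            exact ⟨by simp, Or.inr ⟨P, l, rfl, rfl, hP2⟩⟩
          · apply Subtype.ext
            show Sum.inl (truncFun hkn.le P) = Sum.inl m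
            exact congrArg Sum.inl hP1
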